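/- Let H ≤ Γ be countable groups, let H act on a countable set Y, and let Γ ↷ X be the induced action. If the action H ↷ Y has infinite orbits and H is almost malnormal in Γ, then the restriction to H of the induced action, H ↷ X, has infinite orbits. -/

import Mathlib

/-- `C` is a Følner sequence for the action of `G` on `X` given by `π`. -/
def IsFolnerSeq {G X : Type*} [Group G] (π : G →* Equiv.Perm X) (C : ℕ → Set X) : Prop :=
  (∀ n, (C n).Finite ∧ (C n).Nonempty) ∧
    ∀ g : G, Filter.Tendsto
      (fun n => ((symmDiff (C n) (π g '' C n)).ncard : ℝ) / (C n).ncard)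
      Filter.atTop (nhds 0)

/-- The action of `G` on `X` given by `π` is amenable (admits a Følner sequence). -/
def IsAmenableAction {G X : Type*} [Group G] (π : G →* Equiv.Perm X) : Prop :=
  ∃ C : ℕ → Set X, IsFolnerSeq π C

/-- The action given by `π` has infinite orbits. -/
def HasInfiniteOrbits {G X : Type*} [Group G] (π : G →* Equiv.Perm X) : Prop :=
  ∀ x : X, {y : X | ∃ g : G, π g x = y}.Infinite

/-- The action given by `π` is transitive. -/
def IsTransitiveAction {G X : Type*} [Group G] (π : G →* Equiv.Perm X) : Prop :=
  ∀ x y : X, ∃ g : G, π g x = y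

/-- The action given by `π` is almost free: every non-trivial element has finitely many
fixed points. -/
def IsAlmostFreeAction {G X : Type*} [Group G] (π : G →* Equiv.Perm X) : Prop :=
  ∀ g : G, g ≠ 1 → {x : X | π g x = x}.Finite

/-- The class 𝒜 of countable groups admitting a faithful, transitive and amenable action
on an infinite countable set. -/
def InClassA (G : Type*) [Group G] : Prop :=
  ∃ (X : Type) (_ : Countable X) (_ : Infinite X) (π : G →* Equiv.Perm X),
    Function.Injective π ∧ IsTransitiveAction π ∧ IsAmenableAction π

/-- The class 𝒜_ℱ of countable groups admitting an amenable, almost free action with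
infinite orbits on a countable set. -/
def InClassAF (G : Type*) [Group G] : Prop :=
  ∃ (X : Type) (_ : Countable X) (π : G →* Equiv.Perm X),
    IsAmenableAction π ∧ IsAlmostFreeAction π ∧ HasInfiniteOrbits π
section InducedAction

variable {Γ : Type*} [Group Γ] (H : Subgroup Γ) {Y : Type*} (π : H →* Equiv.Perm Y)

/-- The equivalence relation on `Y × Γ` given by the diagonal `H`-action
`h • (y, g) = (h • y, h * g)`. -/
def indSetoid : Setoid (Y × Γ) where
  r p q := ∃ h : H, π h p.1 = q.1 ∧ (h : Γ) * p.2 = q.2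
  iseqv := by
    constructor
    · intro p
      exact ⟨1, by simp, by simp⟩
    · rintro p q ⟨h, h1, h2⟩
      refine ⟨h⁻¹, ?_, ?_⟩
      · rw [← h1]; simp
      · rw [← h2]; simp [mul_assoc]
    · rintro p q r ⟨h, h1, h2⟩ ⟨k, k1, k2⟩
      refine ⟨k * h, ?_, ?_⟩
      · rw [← k1, ← h1]; simp
      · rw [← k2, ← h2]; simp [mul_assoc]

/-- The underlying set `X = H \ (Y × Γ)` of the induced action. -/
def IndSpace : Type _ := Quotient (indSetoid H π)

/-- The induced action of `Γ` on `X = H \ (Y × Γ)`, given by `γ • [y, g] = [y, g * γ⁻¹]`. -/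
def indHom : Γ →* Equiv.Perm (IndSpace H π) where
  toFun γ :=
    { toFun := Quotient.map' (fun p => (p.1, p.2 * γ⁻¹))
        (by rintro p q ⟨h, h1, h2⟩; exact ⟨h, h1, by show (h : Γ) * (p.2 * _) = q.2 * _; rw [← h2, mul_assoc]⟩)
      invFun := Quotient.map' (fun p => (p.1, p.2 * γ))
        (by rintro p q ⟨h, h1, h2⟩; exact ⟨h, h1, by show (h : Γ) * (p.2 * _) = q.2 * _; rw [← h2, mul_assoc]⟩)
      left_inv := by
        intro x
        induction x using Quotient.inductionOn' with
        | h p => simp [Quotient.map'_mk'', mul_assoc]; rfl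
      right_inv := by
        intro x
        induction x using Quotient.inductionOn' with
        | h p => simp [Quotient.map'_mk'', mul_assoc]; rfl }
  map_one' := by
    apply Equiv.ext
    intro x
    induction x using Quotient.inductionOn' with
    | h p => show Quotient.mk'' (p.1, p.2 * 1⁻¹) = Quotient.mk'' p; simp
  map_mul' γ₁ γ₂ := by
    apply Equiv.ext
    intro x
    induction x using Quotient.inductionOn' with
    | h p =>
      show Quotient.mk'' (p.1, p.2 * (γ₁ * γ₂)⁻¹) = Quotient.mk'' (p.1, p.2 * γ₂⁻¹ * γ₁⁻¹)
      simp [mul_assoc]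

end InducedAction

/-- **Lemma 2.5 (3).**  Let `H ≤ Γ` be countable groups, `H ↷ Y` an action on a countable
set and `Γ ↷ X` the induced action.  If `H ↷ Y` has infinite orbits and `H` is almost
malnormal in `Γ` then the restriction `H ↷ X` of the induced action has infinite
orbits. -/
theorem induced_action_infinite_orbits_of_almost_malnormal
    {Γ Y : Type*} [Group Γ] [Countable Γ] [Countable Y]
    (H : Subgroup Γ) (π : H →* Equiv.Perm Y)
    (hinf : HasInfiniteOrbits π)
    (hmal : ∀ g : Γ, g ∉ H → {x : Γ | x ∈ H ∧ g * x * g⁻¹ ∈ H}.Finite) :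
    HasInfiniteOrbits ((indHom H π).comp H.subtype) := by
  intro x
  induction x using Quotient.inductionOn' with
  | h p =>
  obtain ⟨y, g⟩ := p
  have hact : ∀ h : H, ((indHom H π).comp H.subtype) h (Quotient.mk'' (y, g) : IndSpace H π)
      = (Quotient.mk'' (y, g * (↑h)⁻¹) : IndSpace H π) := fun h => rfl
  by_cases hg : g ∈ H
  · -- case g ∈ H : the orbit contains a copy of the (infinite) H-orbit of y
    have hS := hinf y
    have hinj : Function.Injective (fun z : Y => (Quotient.mk'' (z, (1:Γ)) : IndSpace H π)) := by
      intro a b hab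
      obtain ⟨h, h1, h2⟩ := Quotient.exact' hab
      have hh : (h : Γ) = 1 := by simpa using h2
      have : h = (1 : H) := Subtype.val_injective hh
      rw [this] at h1; simpa using h1
    have himg : ((fun z : Y => (Quotient.mk'' (z, (1:Γ)) : IndSpace H π)) ''
        {z | ∃ k : H, π k y = z}).Infinite := hS.image hinj.injOn
    refine himg.mono ?_
    rintro _ ⟨z, ⟨k, hk⟩, rfl⟩
    refine ⟨k * ⟨g, hg⟩, ?_⟩
    rw [hact]
    apply Quotient.sound'
    refine ⟨k, hk, ?_⟩
    push_cast
    group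
  · -- case g ∉ H : use almost malnormality
    have hHinf : Infinite H := by
      by_contra hfin
      rw [not_infinite_iff_finite] at hfin
      refine hinf y ?_
      have : {z | ∃ k : H, π k y = z} = Set.range (fun k : H => π k y) := by
        ext z; simp [Set.mem_range]
      rw [this]
      exact Set.finite_range _
    set f : H → IndSpace H π := fun h => Quotient.mk'' (y, g * (↑h)⁻¹) with hf
    have hsub : Set.range f ⊆ {z | ∃ h : H,
        ((indHom H π).comp H.subtype) h (Quotient.mk'' (y, g) : IndSpace H π) = z} := by
      rintro _ ⟨h, rfl⟩
      exact ⟨h, (hact h).symm ▸ rfl⟩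
    refine Set.Infinite.mono hsub ?_
    intro hfin
    have hfib : ∀ h₂ : H, (f ⁻¹' {f h₂}).Finite := by
      intro h₂
      have hF := hmal g hg
      have hss : f ⁻¹' {f h₂} ⊆ (fun u : H => h₂ * u) ''
          (Subtype.val ⁻¹' {x : Γ | x ∈ H ∧ g * x * g⁻¹ ∈ H}) := by
        intro h₁ hh₁
        simp only [Set.mem_preimage, Set.mem_singleton_iff, hf] at hh₁
        obtain ⟨k, hk1, hk2⟩ := Quotient.exact' hh₁
        have hk2' : (k : Γ) * (g * (↑h₁)⁻¹) = g * (↑h₂)⁻¹ := hk2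
        refine ⟨h₂⁻¹ * h₁, ⟨(h₂⁻¹ * h₁).2, ?_⟩, by group⟩
        have hkeq : g * (↑(h₂⁻¹ * h₁)) * g⁻¹ = (k : Γ) := by
          push_cast
          have : (k : Γ) = (g * (↑h₂)⁻¹) * (g * (↑h₁)⁻¹)⁻¹ := by
            rw [← hk2']; group
          rw [this]; group
        rw [hkeq]; exact k.2
      exact (((hF.preimage Subtype.val_injective.injOn).image _)).subset hss
    have huniv : (Set.univ : Set H).Finite := by
      have hcov : (Set.univ : Set H) ⊆ ⋃ z ∈ Set.range f, f ⁻¹' {z} := by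
        intro h _
        simp only [Set.mem_iUnion]
        exact ⟨f h, ⟨h, rfl⟩, rfl⟩
      refine (hfin.biUnion ?_).subset hcov
      rintro z ⟨h₂, rfl⟩
      exact hfib h₂
    exact Set.infinite_univ huniv
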